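/- Let d ∈ {3, 11, 19, 43, 67, 163}, let O_K be the ring of integers of K = Q(√−d), let q = 2O_K, and let p ≥ 5 be a prime. Suppose a, b, c ∈ O_K are nonzero, pairwise coprime, satisfy a^p + b^p + c^p = 0, and that 2 divides abc. Let E = E_{a,b,c} be the Frey curve Y² = X(X − a^p)(X + b^p) and let j(E) ∈ K be its j-invariant. Writing n = v_q(abc) ≥ 1 for the q-adic valuation of abc, the q-adic valuation of j(E) equals 8 − 2pn; in particular v_q(j(E)) is negative and is not divisible by p. -/

import Mathlib

open NumberField IsDedekindDomain
open scoped Multiplicative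
local notation "ℤₘ₀" => WithZero (Multiplicative ℤ)

lemma intVal_helper {R : Type*} [CommRing R] [IsDedekindDomain R]
    (v : HeightOneSpectrum R) (π : R) (hπ : v.asIdeal = Ideal.span {π})
    (x : R) (m : ℕ) (h1 : π ^ m ∣ x) (h2 : ¬ π ^ (m + 1) ∣ x) :
    v.intValuation x = (↑(Multiplicative.ofAdd (-(m : ℤ))) : ℤₘ₀) := by
  have hx : x ≠ 0 := by rintro rfl; exact h2 (dvd_zero _)
  have key : ∀ k : ℕ, (v.intValuationDef x ≤ Multiplicative.ofAdd (-(k : ℤ))) ↔ π ^ k ∣ x := by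
    intro k
    rw [← v.intValuation_apply, ← WithZero.exp_eq_coe_ofAdd, v.intValuation_le_pow_iff_dvd, hπ, Ideal.span_singleton_pow,
      Ideal.dvd_span_singleton, Ideal.mem_span_singleton]
  have hne := v.intValuation_ne_zero x hx
  obtain ⟨γ, hγ⟩ := WithZero.ne_zero_iff_exists.mp hne
  have h1' := (key m).mpr h1
  have h2' := fun h => h2 ((key (m + 1)).mp h)
  rw [v.intValuation_apply, ← hγ] at *
  rw [WithZero.coe_le_coe] at h1' h2'
  rw [WithZero.coe_inj]
  have e1 : Multiplicative.toAdd γ ≤ -(m : ℤ) := h1'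
  have e2 : ¬ Multiplicative.toAdd γ ≤ -((m : ℤ) + 1) := by
    intro h
    apply h2'
    rw [← ofAdd_toAdd γ, Multiplicative.ofAdd_le]; push_cast; omega
  have : Multiplicative.toAdd γ = -(m : ℤ) := by omega
  rw [← ofAdd_toAdd γ, this]
theorem valuation_of_j_invariant_of_frey_curve
    (d : ℕ) (hd : d = 3 ∨ d = 11 ∨ d = 19 ∨ d = 43 ∨ d = 67 ∨ d = 163)
    (K : Type*) [Field K] [NumberField K] (hdeg : Module.finrank ℚ K = 2)
    (sqd : K) (hsqd : sqd ^ 2 = -(d : K))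
    (p : ℕ) (hp : p.Prime) (hp5 : 5 ≤ p)
    (a b c : 𝓞 K) (ha : a ≠ 0) (hb : b ≠ 0) (hc : c ≠ 0)
    (hab : IsCoprime a b) (hac : IsCoprime a c) (hbc : IsCoprime b c)
    (habc : a ^ p + b ^ p + c ^ p = 0)
    (h2 : (2 : 𝓞 K) ∣ a * b * c)
    (hq : (Ideal.span {(2 : 𝓞 K)}).IsPrime)
    (hq0 : Ideal.span {(2 : 𝓞 K)} ≠ ⊥)
    (n : ℕ) (hn : (2 : 𝓞 K) ^ n ∣ a * b * c) (hn' : ¬ (2 : 𝓞 K) ^ (n + 1) ∣ a * b * c) :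
    let v : HeightOneSpectrum (𝓞 K) := ⟨Ideal.span {(2 : 𝓞 K)}, hq, hq0⟩
    let jE : K := 2 ^ 8 * (algebraMap (𝓞 K) K (b ^ (2 * p) - a ^ p * c ^ p)) ^ 3 /
      (algebraMap (𝓞 K) K (a * b * c)) ^ (2 * p)
    1 ≤ n ∧
      v.valuation K jE = (↑(Multiplicative.ofAdd (2 * (p : ℤ) * (n : ℤ) - 8)) : WithZero (Multiplicative ℤ)) ∧
      ((8 : ℤ) - 2 * (p : ℤ) * (n : ℤ)) < 0 ∧ ¬ ((p : ℤ) ∣ (8 : ℤ) - 2 * (p : ℤ) * (n : ℤ)) := by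
  intro v jE
  have h20 : (2 : 𝓞 K) ≠ 0 := two_ne_zero
  have hpr : Prime (2 : 𝓞 K) := (Ideal.span_singleton_prime h20).mp hq
  -- n ≥ 1
  have hn1 : 1 ≤ n := by
    rcases Nat.eq_zero_or_pos n with h | h
    · subst h; simp only [zero_add, pow_one] at hn'; exact absurd h2 hn'
    · exact h
  -- 2 does not divide the numerator bracket
  have hu : ¬ (2 : 𝓞 K) ∣ (b ^ (2 * p) - a ^ p * c ^ p) := by
    intro hdvd
    have h2' : (2 : 𝓞 K) ∣ a ∨ (2 : 𝓞 K) ∣ b ∨ (2 : 𝓞 K) ∣ c := by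
      rcases hpr.2.2 _ _ h2 with h | h
      · rcases hpr.2.2 _ _ h with h' | h'
        · exact Or.inl h'
        · exact Or.inr (Or.inl h')
      · exact Or.inr (Or.inr h)
    rcases h2' with h | h | h
    · have hac' : (2 : 𝓞 K) ∣ a ^ p * c ^ p := dvd_mul_of_dvd_left (dvd_pow h hp.ne_zero) _
      have hbb : (2 : 𝓞 K) ∣ b ^ (2 * p) := by
        have := dvd_add hdvd hac'
        rwa [sub_add_cancel] at this
      have : (2 : 𝓞 K) ∣ b := hpr.dvd_of_dvd_pow hbb
      exact hpr.not_isUnit (hab.isUnit_of_dvd' h this)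
    · have hbb : (2 : 𝓞 K) ∣ b ^ (2 * p) := dvd_pow h (by positivity)
      have hac' : (2 : 𝓞 K) ∣ a ^ p * c ^ p := by
        have := dvd_sub hbb hdvd
        rwa [sub_sub_cancel] at this
      rcases hpr.2.2 _ _ hac' with h' | h'
      · exact hpr.not_isUnit (hab.isUnit_of_dvd' (hpr.dvd_of_dvd_pow h') h)
      · exact hpr.not_isUnit (hbc.isUnit_of_dvd' h (hpr.dvd_of_dvd_pow h'))
    · have hac' : (2 : 𝓞 K) ∣ a ^ p * c ^ p := dvd_mul_of_dvd_right (dvd_pow h hp.ne_zero) _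
      have hbb : (2 : 𝓞 K) ∣ b ^ (2 * p) := by
        have := dvd_add hdvd hac'
        rwa [sub_add_cancel] at this
      have : (2 : 𝓞 K) ∣ b := hpr.dvd_of_dvd_pow hbb
      exact hpr.not_isUnit (hbc.isUnit_of_dvd' this h)
  -- valuations of the pieces
  have hspan : v.asIdeal = Ideal.span {(2 : 𝓞 K)} := rfl
  have hden : v.intValuation (a * b * c) = (↑(Multiplicative.ofAdd (-(n : ℤ))) : ℤₘ₀) :=
    intVal_helper v 2 hspan _ n hn hn'
  have hnum : v.intValuation (b ^ (2 * p) - a ^ p * c ^ p)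
      = (↑(Multiplicative.ofAdd (-(0 : ℕ) : ℤ)) : ℤₘ₀) :=
    intVal_helper v 2 hspan _ 0 (by simp) (by simpa using hu)
  have h4 : ¬ (2 : 𝓞 K) ^ (1 + 1) ∣ (2 : 𝓞 K) := by
    intro h
    have : (2 : 𝓞 K) * 2 ∣ 2 * 1 := by simpa [pow_succ, pow_one] using h
    exact hpr.not_isUnit (isUnit_of_dvd_one ((mul_dvd_mul_iff_left h20).mp this))
  have htwo : v.intValuation (2 : 𝓞 K) = (↑(Multiplicative.ofAdd (-(1 : ℤ))) : ℤₘ₀) :=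
    intVal_helper v 2 hspan 2 1 (by simp) h4
  -- compute the valuation of jE
  have h2K : (2 : K) = algebraMap (𝓞 K) K (2 : 𝓞 K) := (map_ofNat _ 2).symm
  have hval : v.valuation K jE = (↑(Multiplicative.ofAdd (2 * (p : ℤ) * (n : ℤ) - 8)) : ℤₘ₀) := by
    show v.valuation K (2 ^ 8 * (algebraMap (𝓞 K) K (b ^ (2 * p) - a ^ p * c ^ p)) ^ 3 /
      (algebraMap (𝓞 K) K (a * b * c)) ^ (2 * p)) = _
    have e1 : v.valuation K ((algebraMap (𝓞 K) K) (a * b * c) ^ (2 * p))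
        = ((↑(Multiplicative.ofAdd (-(n : ℤ))) : ℤₘ₀)) ^ (2 * p) := by
      rw [map_pow, v.valuation_of_algebraMap, hden]
    have e2 : v.valuation K ((algebraMap (𝓞 K) K) (b ^ (2 * p) - a ^ p * c ^ p) ^ 3)
        = ((↑(Multiplicative.ofAdd (-(0 : ℕ) : ℤ)) : ℤₘ₀)) ^ 3 := by
      rw [map_pow, v.valuation_of_algebraMap, hnum]
    have e3 : v.valuation K ((2 : K) ^ 8)
        = ((↑(Multiplicative.ofAdd (-(1 : ℤ))) : ℤₘ₀)) ^ 8 := by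
      rw [h2K, map_pow, v.valuation_of_algebraMap, htwo]
    rw [map_div₀, map_mul, e1, e2, e3]
    rw [← WithZero.coe_pow, ← WithZero.coe_pow, ← WithZero.coe_pow,
      ← WithZero.coe_mul, ← WithZero.coe_div, WithZero.coe_inj]
    apply Multiplicative.toAdd.injective
    simp only [toAdd_div, toAdd_mul, toAdd_pow, toAdd_ofAdd, smul_eq_mul]
    push_cast
    ring
  refine ⟨hn1, hval, ?_, ?_⟩
  · have h5 : (5 : ℤ) ≤ (p : ℤ) := by exact_mod_cast hp5
    have h1 : (1 : ℤ) ≤ (n : ℤ) := by exact_mod_cast hn1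
    nlinarith
  · intro hdvd
    have hd8 : (p : ℤ) ∣ 8 := by
      have : (p : ℤ) ∣ (8 - 2 * (p : ℤ) * (n : ℤ)) + 2 * (p : ℤ) * (n : ℤ) :=
        dvd_add hdvd ⟨2 * n, by ring⟩
      simpa using this
    have hd8'' : ((p : ℕ) : ℤ) ∣ ((8 : ℕ) : ℤ) := by exact_mod_cast hd8
    have hd8' : p ∣ 8 := Int.natCast_dvd_natCast.mp hd8''
    have h23 : p ∣ 2 ^ 3 := by
      have h8 : (2 : ℕ) ^ 3 = 8 := by norm_num
      rw [h8]; exact hd8'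
    have : p ∣ 2 := hp.dvd_of_dvd_pow h23
    have := Nat.le_of_dvd (by norm_num) this
    omega
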